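/- Let f ≥ 3 be an integer and let m ≥ 1 be a divisor of f. Then in ℚ[(ℤ/mℤ)ˣ] one has π_{f,m}(S_f) = (∏_{ℓ prime, ℓ ∣ f, ℓ ∤ m} (1 − [σ_ℓ]⁻¹)) · S_m, where the product runs over the finitely many prime numbers dividing f but not m. -/

import Mathlib

open scoped BigOperators

open Finset MonoidAlgebra

lemma sum_Icc_mul {M : Type*} [AddCommMonoid M] (g : ℕ → M) (k m : ℕ) :
    ∑ a ∈ Finset.Icc 1 (k * m), g a
      = ∑ j ∈ Finset.range k, ∑ c ∈ Finset.Icc 1 m, g (j * m + c) := by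
  induction k with
  | zero => simp
  | succ k ih =>
    rw [Finset.sum_range_succ, ← ih]
    have h0 : ∀ n : ℕ, Finset.Icc 1 n = Finset.Ioc 0 n := fun n => Finset.Icc_add_one_left_eq_Ioc 0 n
    have h2 : ∑ c ∈ Finset.Icc 1 m, g (k * m + c)
        = ∑ a ∈ Finset.Ioc (k*m) (k*m + m), g a := by
      have : Finset.Ioc (k*m) (k*m + m) = (Finset.Ioc 0 m).map (addLeftEmbedding (k*m)) := by
        rw [Finset.map_add_left_Ioc]; simp
      rw [h0, this, Finset.sum_map]
      simp [addLeftEmbedding]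
    rw [h0, h0, h2, Finset.sum_Ioc_consecutive g (Nat.zero_le _) (Nat.le_add_right _ _),
      Nat.succ_mul]

lemma sum_dvd_reindex {M : Type*} [AddCommMonoid M] (g : ℕ → M) (d f : ℕ)
    (hd : d ∣ f) (hd0 : 0 < d) :
    ∑ a ∈ Finset.Icc 1 f, (if d ∣ a then g a else 0)
      = ∑ b ∈ Finset.Icc 1 (f / d), g (d * b) := by
  classical
  set e : ℕ ↪ ℕ := ⟨fun b => d * b, mul_right_injective₀ (by omega)⟩ with he
  have hsub : (Finset.Icc 1 (f / d)).map e ⊆ Finset.Icc 1 f := by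
    intro a ha
    simp only [Finset.mem_map, Finset.mem_Icc, he, Function.Embedding.coeFn_mk] at ha
    obtain ⟨b, ⟨hb1, hb2⟩, rfl⟩ := ha
    refine Finset.mem_Icc.mpr ⟨Nat.one_le_iff_ne_zero.mpr (by positivity), ?_⟩
    calc d * b ≤ d * (f / d) := Nat.mul_le_mul_left d hb2
      _ = f := Nat.mul_div_cancel' hd
  rw [← Finset.sum_subset hsub, Finset.sum_map]
  · apply Finset.sum_congr rfl
    intro b hb
    simp only [he, Function.Embedding.coeFn_mk]
    rw [if_pos (Dvd.intro b rfl)]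
  · intro a ha hna
    rw [if_neg]
    intro hda
    apply hna
    simp only [Finset.mem_Icc] at ha
    refine Finset.mem_map.mpr ⟨a / d, ?_, ?_⟩
    · refine Finset.mem_Icc.mpr ⟨(Nat.one_le_div_iff hd0).mpr (Nat.le_of_dvd (by omega) hda),
        Nat.div_le_div_right ha.2⟩
    · simp [he, Nat.mul_div_cancel' hda]

/-- auxiliary: the sum `Σ_{a∈[1,F], (a,m)=1} (a/F - 1/2)·[ā]⁻¹` in `ℚ[(ZMod m)ˣ]`. -/
noncomputable def sden (F m : ℕ) : MonoidAlgebra ℚ (ZMod m)ˣ :=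
  ∑ a ∈ Finset.Icc 1 F,
    if h : Nat.Coprime a m then
      ((a : ℚ) / F - 1 / 2) • MonoidAlgebra.single ((ZMod.unitOfCoprime a h)⁻¹) (1 : ℚ)
    else 0

lemma stickelberger_eq (m : ℕ) : (-(sden m m) : MonoidAlgebra ℚ (ZMod m)ˣ) =
    -(∑ a ∈ Finset.Icc 1 m,
      if h : Nat.Coprime a m then
        ((a : ℚ) / m - 1 / 2) • MonoidAlgebra.single ((ZMod.unitOfCoprime a h)⁻¹) (1 : ℚ)
      else 0) := rfl

/-- the "unit indicator" `v m c`. -/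
noncomputable def vv (m c : ℕ) : MonoidAlgebra ℚ (ZMod m)ˣ :=
  if h : Nat.Coprime c m then MonoidAlgebra.single ((ZMod.unitOfCoprime c h)⁻¹) (1 : ℚ) else 0

lemma sden_eq_vv (F m : ℕ) : sden F m = ∑ a ∈ Finset.Icc 1 F, ((a : ℚ) / F - 1/2) • vv m a := by
  unfold sden vv
  apply Finset.sum_congr rfl
  intro a _
  split_ifs with h <;> simp

lemma coprime_add_mul (j c m : ℕ) : Nat.Coprime (j * m + c) m ↔ Nat.Coprime c m := by
  rw [add_comm, Nat.coprime_add_mul_right_left]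

lemma vv_add_mul (m j c : ℕ) : vv m (j * m + c) = vv m c := by
  unfold vv
  have hco : Nat.Coprime (j * m + c) m ↔ Nat.Coprime c m := coprime_add_mul j c m
  split_ifs with h1 h2 h2
  · congr 1
    congr 1
    ext
    push_cast [ZMod.coe_unitOfCoprime]
    simp
  · exact absurd (hco.mp h1) h2
  · exact absurd (hco.mpr h2) h1
  · rfl

lemma coeff_sum (k m c : ℕ) (hk : 1 ≤ k) (hm : 1 ≤ m) :
    ∑ j ∈ Finset.range k, (((j * m + c : ℕ) : ℚ) / ((k * m : ℕ) : ℚ) - 1/2)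
      = (c : ℚ) / m - 1/2 := by
  have hgauss : (∑ j ∈ Finset.range k, (j : ℚ)) = k * (k - 1) / 2 := by
    have h := Finset.sum_range_id_mul_two k
    have h3 := congrArg (fun n : ℕ => (n : ℚ)) h
    push_cast [Nat.cast_sub hk] at h3
    linarith
  have hk0 : (k : ℚ) ≠ 0 := by positivity
  have hm0 : (m : ℚ) ≠ 0 := by positivity
  rw [Finset.sum_sub_distrib, Finset.sum_const, Finset.card_range]
  push_cast
  rw [← Finset.sum_div, Finset.sum_add_distrib, Finset.sum_const, Finset.card_range,
    ← Finset.sum_mul, hgauss]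
  field_simp
  ring

lemma sden_mul (k m : ℕ) (hk : 1 ≤ k) (hm : 1 ≤ m) : sden (k * m) m = sden m m := by
  rw [sden_eq_vv, sden_eq_vv, sum_Icc_mul (M := MonoidAlgebra ℚ (ZMod m)ˣ)
    (g := fun a => ((a : ℚ) / (k*m : ℕ) - 1/2) • vv m a) k m, Finset.sum_comm]
  apply Finset.sum_congr rfl
  intro c _
  have h1 : ∀ j ∈ Finset.range k,
      (((j*m+c : ℕ) : ℚ) / ((k*m : ℕ) : ℚ) - 1/2) • vv m (j*m+c)
        = (((j*m+c : ℕ) : ℚ) / ((k*m : ℕ) : ℚ) - 1/2) • vv m c :=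
    fun j _ => by rw [vv_add_mul]
  rw [Finset.sum_congr rfl h1, ← Finset.sum_smul, coeff_sum k m c hk hm]

lemma coprime_of_forall (a f : ℕ) (h : ∀ p : ℕ, p.Prime → p ∣ f → ¬ p ∣ a) :
    Nat.Coprime a f := by
  by_contra hc
  obtain ⟨p, hp, hpd⟩ := Nat.exists_prime_and_dvd hc
  exact h p hp (hpd.trans (Nat.gcd_dvd_right a f)) (hpd.trans (Nat.gcd_dvd_left a f))

lemma vv_mul (m d b : ℕ) (hdm : Nat.Coprime d m) :
    vv m (d * b) = MonoidAlgebra.single ((ZMod.unitOfCoprime d hdm)⁻¹) (1 : ℚ) * vv m b := by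
  unfold vv
  by_cases hb : Nat.Coprime b m
  · have hdb : Nat.Coprime (d * b) m := Nat.Coprime.mul hdm hb
    rw [dif_pos hb, dif_pos hdb, MonoidAlgebra.single_mul_single, one_mul]
    congr 1
    rw [← mul_inv]
    congr 1
    ext
    push_cast [ZMod.coe_unitOfCoprime]
    simp [ZMod.coe_unitOfCoprime]
  · have hdb : ¬ Nat.Coprime (d * b) m :=
      fun h => hb (Nat.Coprime.coprime_dvd_left (dvd_mul_left b d) h)
    rw [dif_neg hb, dif_neg hdb, mul_zero]

lemma step2 (f m d : ℕ) (hm : 1 ≤ m) (hf : 1 ≤ f) (hmd : m * d ∣ f)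
    (hdm : Nat.Coprime d m) (hd0 : 0 < d) :
    ∑ a ∈ Finset.Icc 1 f, (if d ∣ a then ((a : ℚ)/f - 1/2) • vv m a else 0)
      = MonoidAlgebra.single ((ZMod.unitOfCoprime d hdm)⁻¹) (1:ℚ) * sden m m := by
  have hdf : d ∣ f := (dvd_mul_left d m).trans hmd
  have hmfd : m ∣ f / d := (Nat.dvd_div_iff_mul_dvd hdf).mpr (by rwa [mul_comm] at hmd)
  set k : ℕ := f / d / m with hk
  have hfd : f / d = k * m := by rw [hk, Nat.div_mul_cancel hmfd]
  have hfd0 : 0 < f / d := Nat.div_pos (Nat.le_of_dvd (by omega) hdf) hd0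
  have hk1 : 1 ≤ k := by
    rcases Nat.eq_zero_or_pos k with h | h
    · rw [h, zero_mul] at hfd; omega
    · exact h
  have hcast : (f : ℚ) = (d : ℚ) * ((f / d : ℕ) : ℚ) := by
    exact_mod_cast (Nat.mul_div_cancel' hdf).symm
  rw [sum_dvd_reindex (fun a => ((a : ℚ)/f - 1/2) • vv m a) d f hdf hd0]
  have key : ∀ b : ℕ, (((d * b : ℕ) : ℚ)/f - 1/2) • vv m (d * b)
      = MonoidAlgebra.single ((ZMod.unitOfCoprime d hdm)⁻¹) (1:ℚ)
        * (((b : ℚ)/((f/d : ℕ) : ℚ) - 1/2) • vv m b) := by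
    intro b
    have hco : ((d * b : ℕ) : ℚ)/f = (b : ℚ)/((f/d : ℕ) : ℚ) := by
      rw [hcast]
      push_cast
      rw [mul_div_mul_left]
      positivity
    rw [hco, vv_mul m d b hdm, mul_smul_comm]
  rw [Finset.sum_congr rfl (fun b _ => key b), ← Finset.mul_sum, ← sden_eq_vv]
  rw [hfd] at *
  rw [sden_mul k m hk1 hm]

lemma indicator_ie (Q : Finset ℕ) (P : ℕ → Prop) [DecidablePred P] :
    (if ∀ ℓ ∈ Q, ¬ P ℓ then (1:ℚ) else 0)
      = ∑ T ∈ Q.powerset, (-1:ℚ)^T.card * (if ∀ ℓ ∈ T, P ℓ then 1 else 0) := by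
  classical
  have h2 := Finset.prod_add (fun ℓ => -(if P ℓ then (1:ℚ) else 0)) (fun _ => (1:ℚ)) Q
  have hL : ∏ ℓ ∈ Q, (-(if P ℓ then (1:ℚ) else 0) + 1) = if ∀ ℓ ∈ Q, ¬ P ℓ then (1:ℚ) else 0 := by
    rw [← Finset.prod_boole (p := fun ℓ => ¬ P ℓ)]
    apply Finset.prod_congr rfl
    intro ℓ _
    by_cases h : P ℓ <;> simp [h]
  have hR : ∀ T ∈ Q.powerset, (∏ ℓ ∈ T, -(if P ℓ then (1:ℚ) else 0)) * ∏ _ℓ ∈ Q \ T, (1:ℚ)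
      = (-1:ℚ)^T.card * (if ∀ ℓ ∈ T, P ℓ then 1 else 0) := by
    intro T _
    rw [Finset.prod_const_one, mul_one, ← Finset.prod_boole (p := P)]
    have hneg : ∀ ℓ ∈ T, -(if P ℓ then (1:ℚ) else 0) = (-1) * (if P ℓ then (1:ℚ) else 0) :=
      fun ℓ _ => (neg_one_mul _).symm
    rw [Finset.prod_congr rfl hneg, Finset.prod_mul_distrib, Finset.prod_const]
  rw [← hL, h2, Finset.sum_congr rfl hR]

lemma mapdom_single (m f : ℕ) (hdvd : m ∣ f) (u : (ZMod f)ˣ) (r : ℚ) :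
    MonoidAlgebra.mapDomainRingHom ℚ (ZMod.unitsMap hdvd) (MonoidAlgebra.single u r)
      = MonoidAlgebra.single (ZMod.unitsMap hdvd u) r := by
  simp [MonoidAlgebra.mapDomainRingHom, Finsupp.mapDomain_single]

/-- The Stickelberger element `S_f ∈ ℚ[(ℤ/fℤ)ˣ]`,
`S_f := −Σ_{1≤a≤f, gcd(a,f)=1} (a/f − 1/2)·[ā]⁻¹`. -/
noncomputable def stickelberger (f : ℕ) : MonoidAlgebra ℚ (ZMod f)ˣ :=
  -(∑ a ∈ Finset.Icc 1 f,
      if h : Nat.Coprime a f then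
        ((a : ℚ) / f - 1 / 2) • MonoidAlgebra.single ((ZMod.unitOfCoprime a h)⁻¹) (1 : ℚ)
      else 0)

/-- The map `π_{f,m} : ℚ[(ℤ/fℤ)ˣ] → ℚ[(ℤ/mℤ)ˣ]` induced by reduction mod `m`. -/
noncomputable def projMap (f m : ℕ) (h : m ∣ f) :
    MonoidAlgebra ℚ (ZMod f)ˣ →+* MonoidAlgebra ℚ (ZMod m)ˣ :=
  MonoidAlgebra.mapDomainRingHom ℚ (ZMod.unitsMap h)

theorem statement0 (f m : ℕ) (hf : 3 ≤ f) (hm : 1 ≤ m) (hdvd : m ∣ f) :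
    projMap f m hdvd (stickelberger f) =
      (∏ ℓ ∈ f.primeFactors.attach,
        if h : (ℓ : ℕ) ∣ m then 1
        else 1 - MonoidAlgebra.single
            ((ZMod.unitOfCoprime (ℓ : ℕ)
              (((Nat.prime_of_mem_primeFactors ℓ.2).coprime_iff_not_dvd).mpr h))⁻¹) (1 : ℚ))
        * stickelberger m := by
  classical
  have hf0 : f ≠ 0 := by omega
  have hf1 : 1 ≤ f := by omega
  set Q : Finset ℕ := f.primeFactors.filter (fun ℓ => ¬ ℓ ∣ m) with hQ
  have hQmem : ∀ ℓ ∈ Q, ℓ.Prime ∧ ℓ ∣ f ∧ ¬ ℓ ∣ m := by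
    intro ℓ hl
    rw [hQ, Finset.mem_filter, Nat.mem_primeFactors] at hl
    tauto
  have hQcop : ∀ ℓ ∈ Q, Nat.Coprime ℓ m := fun ℓ hl =>
    ((hQmem ℓ hl).1.coprime_iff_not_dvd).mpr (hQmem ℓ hl).2.2
  -- the unit function
  set w : ℕ → (ZMod m)ˣ := fun ℓ =>
    if h : Nat.Coprime ℓ m then ZMod.unitOfCoprime ℓ h else 1 with hw
  -- facts about products over subsets of Q
  have hT_cop : ∀ T ∈ Q.powerset, Nat.Coprime (∏ ℓ ∈ T, ℓ) m := by
    intro T hT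
    rw [Finset.mem_powerset] at hT
    exact Nat.Coprime.prod_left (fun ℓ hl => hQcop ℓ (hT hl))
  have hT_dvd : ∀ T ∈ Q.powerset, (∏ ℓ ∈ T, ℓ) ∣ f := by
    intro T hT
    rw [Finset.mem_powerset] at hT
    exact Finset.prod_primes_dvd f (fun p hp => (hQmem p (hT hp)).1.prime)
      (fun p hp => (hQmem p (hT hp)).2.1)
  have hT_pos : ∀ T ∈ Q.powerset, 0 < ∏ ℓ ∈ T, ℓ := by
    intro T hT
    rw [Finset.mem_powerset] at hT
    exact Finset.prod_pos (fun p hp => (hQmem p (hT hp)).1.pos)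
  have hT_mdvd : ∀ T ∈ Q.powerset, m * (∏ ℓ ∈ T, ℓ) ∣ f := fun T hT =>
    Nat.Coprime.mul_dvd_of_dvd_of_dvd (hT_cop T hT).symm hdvd (hT_dvd T hT)
  have hT_unit : ∀ T (hT : T ∈ Q.powerset),
      (∏ ℓ ∈ T, w ℓ) = ZMod.unitOfCoprime (∏ ℓ ∈ T, ℓ) (hT_cop T hT) := by
    intro T hT
    rw [Finset.mem_powerset] at hT
    ext
    rw [ZMod.coe_unitOfCoprime, Nat.cast_prod]
    have := (map_prod (Units.coeHom (ZMod m)) (fun ℓ => w ℓ) T)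
    simp only [Units.coeHom_apply] at this
    rw [this]
    apply Finset.prod_congr rfl
    intro ℓ hl
    simp only [hw, dif_pos (hQcop ℓ (hT hl)), ZMod.coe_unitOfCoprime]
  have hcopm : ∀ (a : ℕ), Nat.Coprime a f → Nat.Coprime a m :=
    fun a h => Nat.Coprime.coprime_dvd_right hdvd h
  have hunits : ∀ (a : ℕ) (h : Nat.Coprime a f),
      ZMod.unitsMap hdvd (ZMod.unitOfCoprime a h)
        = ZMod.unitOfCoprime a (hcopm a h) := by
    intro a h
    ext
    rw [ZMod.unitsMap_def]
    simp [ZMod.coe_unitOfCoprime]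
  -- Step A : expand the projection
  have hproj : projMap f m hdvd (stickelberger f)
      = -(∑ a ∈ Finset.Icc 1 f,
          if Nat.Coprime a f then ((a:ℚ)/f - 1/2) • vv m a else 0) := by
    unfold stickelberger projMap
    rw [map_neg, map_sum]
    congr 1
    apply Finset.sum_congr rfl
    intro a _
    split_ifs with h
    · rw [MonoidAlgebra.smul_single', mul_one]
      rw [mapdom_single m f hdvd, map_inv, hunits a h]
      unfold vv
      rw [dif_pos (hcopm a h), MonoidAlgebra.smul_single', mul_one]
    · simp
  -- Step B : inclusion-exclusion per term
  have hie : ∀ a ∈ Finset.Icc 1 f,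
      (if Nat.Coprime a f then ((a:ℚ)/f - 1/2) • vv m a else 0)
        = ∑ T ∈ Q.powerset, (-1:ℚ)^T.card •
            (if (∏ ℓ ∈ T, ℓ) ∣ a then ((a:ℚ)/f - 1/2) • vv m a else 0) := by
    intro a _
    by_cases hma : Nat.Coprime a m
    · have hcongr : ∀ T ∈ Q.powerset,
          (-1:ℚ)^T.card • (if (∏ ℓ ∈ T, ℓ) ∣ a then ((a:ℚ)/f - 1/2) • vv m a else 0)
            = ((-1:ℚ)^T.card * (if ∀ ℓ ∈ T, ℓ ∣ a then 1 else 0))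
                • (((a:ℚ)/f - 1/2) • vv m a) := by
        intro T hT
        have hdd : (∏ ℓ ∈ T, ℓ) ∣ a ↔ ∀ ℓ ∈ T, ℓ ∣ a :=
          ⟨fun hd ℓ hl => (Finset.dvd_prod_of_mem _ hl).trans hd,
            fun hall => Finset.prod_primes_dvd a
              (fun p hp => (hQmem p (Finset.mem_powerset.mp hT hp)).1.prime)
              hall⟩
        rw [if_congr hdd rfl rfl]
        split_ifs <;> simp [smul_smul]
      rw [Finset.sum_congr rfl hcongr, ← Finset.sum_smul,
        ← indicator_ie Q (fun ℓ => ℓ ∣ a)]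
      have hiff : Nat.Coprime a f ↔ ∀ ℓ ∈ Q, ¬ ℓ ∣ a := by
        constructor
        · intro h ℓ hl hla
          have h2 : Nat.Coprime a ℓ := Nat.Coprime.coprime_dvd_right (hQmem ℓ hl).2.1 h
          exact ((hQmem ℓ hl).1.coprime_iff_not_dvd).mp h2.symm hla
        · intro h
          apply coprime_of_forall
          intro p hp hpf hpa
          by_cases hpm : p ∣ m
          · have hp1 : p ∣ 1 := by
              have := Nat.dvd_gcd hpa hpm
              rwa [hma] at this
            exact absurd (Nat.dvd_one.mp hp1) hp.one_lt.ne'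
          · exact h p (by
              rw [hQ, Finset.mem_filter]
              exact ⟨Nat.mem_primeFactors.mpr ⟨hp, hpf, hf0⟩, hpm⟩) hpa
      rw [if_congr hiff rfl rfl]
      split_ifs with h1
      · rw [one_smul]
      · rw [zero_smul]
    · have hv : vv m a = 0 := by unfold vv; rw [dif_neg hma]
      simp [hv]
  -- Step C : apply step2 to each subset
  have hstep : ∀ T ∈ Q.powerset,
      (∑ a ∈ Finset.Icc 1 f, (-1:ℚ)^T.card •
          (if (∏ ℓ ∈ T, ℓ) ∣ a then ((a:ℚ)/f - 1/2) • vv m a else 0))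
        = (-1:ℚ)^T.card •
            (MonoidAlgebra.single ((∏ ℓ ∈ T, w ℓ)⁻¹) (1:ℚ) * sden m m) := by
    intro T hT
    rw [← Finset.smul_sum,
      step2 f m (∏ ℓ ∈ T, ℓ) hm hf1 (hT_mdvd T hT) (hT_cop T hT) (hT_pos T hT),
      hT_unit T hT]
  -- Step D : expand the product
  have hprod : (∏ ℓ ∈ f.primeFactors.attach,
        if h : (ℓ : ℕ) ∣ m then 1
        else 1 - MonoidAlgebra.single
            ((ZMod.unitOfCoprime (ℓ : ℕ)
              (((Nat.prime_of_mem_primeFactors ℓ.2).coprime_iff_not_dvd).mpr h))⁻¹) (1 : ℚ))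
      = ∑ T ∈ Q.powerset,
          MonoidAlgebra.single ((∏ ℓ ∈ T, w ℓ)⁻¹) ((-1:ℚ)^T.card) := by
    have h1 : ∀ ℓ ∈ f.primeFactors.attach,
        (if h : (ℓ : ℕ) ∣ m then 1
          else 1 - MonoidAlgebra.single
            ((ZMod.unitOfCoprime (ℓ : ℕ)
              (((Nat.prime_of_mem_primeFactors ℓ.2).coprime_iff_not_dvd).mpr h))⁻¹) (1 : ℚ))
          = (if (ℓ : ℕ) ∣ m then 1
              else 1 - MonoidAlgebra.single ((w (ℓ : ℕ))⁻¹) (1:ℚ)) := by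
      intro ℓ _
      by_cases h : (ℓ : ℕ) ∣ m
      · rw [dif_pos h, if_pos h]
      · rw [dif_neg h, if_neg h]
        have hwl : w (ℓ : ℕ) = ZMod.unitOfCoprime (ℓ : ℕ)
            (((Nat.prime_of_mem_primeFactors ℓ.2).coprime_iff_not_dvd).mpr h) := by
          simp only [hw,
            dif_pos (((Nat.prime_of_mem_primeFactors ℓ.2).coprime_iff_not_dvd).mpr h)]
        rw [hwl]
    rw [Finset.prod_congr rfl h1,
      Finset.prod_attach f.primeFactors
        (fun n => if n ∣ m then 1 else 1 - MonoidAlgebra.single ((w n)⁻¹) (1:ℚ))]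
    have h2 : ∀ n ∈ f.primeFactors,
        (if n ∣ m then 1 else 1 - MonoidAlgebra.single ((w n)⁻¹) (1:ℚ))
          = (if ¬ n ∣ m then 1 - MonoidAlgebra.single ((w n)⁻¹) (1:ℚ) else 1) := by
      intro n _
      by_cases h : n ∣ m <;> simp [h]
    rw [Finset.prod_congr rfl h2, ← Finset.prod_filter, ← hQ]
    have h4 : ∀ ℓ ∈ Q, (1 : MonoidAlgebra ℚ (ZMod m)ˣ) - MonoidAlgebra.single ((w ℓ)⁻¹) 1
        = -(MonoidAlgebra.single ((w ℓ)⁻¹) (1:ℚ)) + 1 := fun ℓ _ => by rw [sub_eq_neg_add]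
    rw [Finset.prod_congr rfl h4,
      Finset.prod_add (fun ℓ => -(MonoidAlgebra.single ((w ℓ)⁻¹) (1:ℚ)))
        (fun _ => (1 : MonoidAlgebra ℚ (ZMod m)ˣ)) Q]
    apply Finset.sum_congr rfl
    intro T _
    rw [Finset.prod_const_one, mul_one]
    have h5 : ∀ ℓ ∈ T, -(MonoidAlgebra.single ((w ℓ)⁻¹) (1:ℚ))
        = MonoidAlgebra.single ((w ℓ)⁻¹) (-1:ℚ) := by
      intro ℓ _
      have : MonoidAlgebra.single ((w ℓ)⁻¹) (-1:ℚ)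
          = MonoidAlgebra.single ((w ℓ)⁻¹) ((-1 : ℚ) * 1) := by norm_num
    
      rw [this, ← MonoidAlgebra.smul_single', neg_smul, one_smul]
    rw [Finset.prod_congr rfl h5, MonoidAlgebra.prod_single, Finset.prod_inv_distrib,
      Finset.prod_const]
  -- final assembly
  rw [hproj, Finset.sum_congr rfl hie, Finset.sum_comm, Finset.sum_congr rfl hstep, hprod]
  have h6 : ∀ T ∈ Q.powerset,
      (-1:ℚ)^T.card • (MonoidAlgebra.single ((∏ ℓ ∈ T, w ℓ)⁻¹) (1:ℚ) * sden m m)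
        = MonoidAlgebra.single ((∏ ℓ ∈ T, w ℓ)⁻¹) ((-1:ℚ)^T.card) * sden m m := by
    intro T _
    rw [← smul_mul_assoc, MonoidAlgebra.smul_single', mul_one]
  rw [Finset.sum_congr rfl h6, ← Finset.sum_mul]
  have h7 : stickelberger m = -(sden m m) := rfl
  rw [h7, mul_neg]
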